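/- arXiv:2106.14086 — 2 statements merged into one kernel-verified Lean document; each statement's English description precedes it below -/
import Mathlib

section
/- For a strongly connected weighted directed graph with positive arc weights, the row vector α defined by letting α_i be the sum over all inward directed spanning trees rooted at vertex i of the product of their arc weights, satisfies α·L = 0, where L is the directed Laplacian; moreover each α_i > 0. -/
open Finset

/-- The directed Laplacian of a weighted directed multigraph. -/
def lap {n : ℕ} {D : Type*} [Fintype D]
    (tail head : D → Fin n) (w : D → ℝ) : Matrix (Fin n) (Fin n) ℝ :=
  fun i j =>
    (if i = j then ∑ d ∈ univ.filter (fun d => tail d = i), w d else 0)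
      - ∑ d ∈ univ.filter (fun d => tail d = i ∧ head d = j), w d

/-- One step along an arc of `T` from `x` to `y`. -/
def treeStep {n : ℕ} {D : Type*} (tail head : D → Fin n) (T : Finset D)
    (x y : Fin n) : Prop :=
  ∃ d ∈ T, tail d = x ∧ head d = y

/-- `T` is an inward directed spanning tree rooted at `i`: every vertex other than the
root has exactly one outgoing arc in `T`, the root has none, and every vertex reaches
the root along arcs of `T` (this last condition rules out directed cycles). -/
def IsInwardTree {n : ℕ} {D : Type*} [Fintype D] (tail head : D → Fin n)
    (i : Fin n) (T : Finset D) : Prop :=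
  (∀ v, v ≠ i → (T.filter (fun d => tail d = v)).card = 1) ∧
  (T.filter (fun d => tail d = i)).card = 0 ∧
  (∀ v, Relation.ReflTransGen (treeStep tail head T) v i)

open scoped Classical in
/-- `treeWeightSum tail head w i` = sum over all inward directed spanning trees rooted at
`i` of the product of their arc weights. -/
noncomputable def treeWeightSum {n : ℕ} {D : Type*} [Fintype D]
    (tail head : D → Fin n) (w : D → ℝ) (i : Fin n) : ℝ :=
  ∑ T : Finset D, if IsInwardTree tail head i T then ∏ d ∈ T, w d else 0

/-! ### Auxiliary material for the proof -/

namespace MTaux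

/-- A "functional graph flowing to `j`": every vertex has exactly one outgoing arc,
and every vertex reaches `j`. -/
def IsFunc {n : ℕ} {D : Type*} (tail head : D → Fin n) (j : Fin n) (F : Finset D) : Prop :=
  (∀ v, (F.filter (fun d => tail d = v)).card = 1) ∧
  (∀ v, Relation.ReflTransGen (treeStep tail head F) v j)

section relational

variable {α : Type*} {r : α → α → Prop} {g : α → α} {i : α}

lemma reach_iterate (hg : ∀ x y, r x y → y = g x) {v u : α}
    (h : Relation.ReflTransGen r v u) : ∃ m, g^[m] v = u := by
  induction h with
  | refl => exact ⟨0, rfl⟩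
  | tail hab hbc ih =>
    obtain ⟨m, hm⟩ := ih
    exact ⟨m + 1, by rw [Function.iterate_succ_apply', hm, ← hg _ _ hbc]⟩

lemma reach_iterate_avoid (hg : ∀ x y, r x y → x ≠ i ∧ y = g x) {v u : α}
    (h : Relation.ReflTransGen r v u) :
    ∃ m, g^[m] v = u ∧ ∀ t < m, g^[t] v ≠ i := by
  induction h with
  | refl => exact ⟨0, rfl, fun t ht => absurd ht (Nat.not_lt_zero t)⟩
  | tail hab hbc ih =>
    obtain ⟨m, hm, hav⟩ := ih
    obtain ⟨hne, hc⟩ := hg _ _ hbc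
    refine ⟨m + 1, by rw [Function.iterate_succ_apply', hm, ← hc], ?_⟩
    intro t ht
    rcases Nat.lt_succ_iff_lt_or_eq.mp ht with h | h
    · exact hav t h
    · rw [h, hm]; exact hne

lemma iterate_reach (hg : ∀ x, x ≠ i → r x (g x)) :
    ∀ (m : ℕ) (v : α), g^[m] v = i → Relation.ReflTransGen r v i := by
  intro m
  induction m with
  | zero =>
    intro v hv
    rw [Function.iterate_zero_apply] at hv
    exact hv ▸ Relation.ReflTransGen.refl
  | succ m ih =>
    intro v hv
    by_cases hvi : v = i
    · exact hvi ▸ Relation.ReflTransGen.refl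
    · exact Relation.ReflTransGen.head (hg v hvi)
        (ih (g v) (by rwa [← Function.iterate_succ_apply]))

end relational

variable {n : ℕ} {D : Type*} [Fintype D] [DecidableEq D] {tail head : D → Fin n} {w : D → ℝ}

lemma sigma_mem {F : Finset D} {σ : Fin n → D}
    (hσ : ∀ v, F.filter (fun d => tail d = v) = {σ v}) (v : Fin n) :
    σ v ∈ F ∧ tail (σ v) = v := by
  have h : σ v ∈ F.filter (fun d => tail d = v) := by
    rw [hσ v]; exact Finset.mem_singleton_self _
  simpa using h

lemma sigma_eq {F : Finset D} {σ : Fin n → D}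
    (hσ : ∀ v, F.filter (fun d => tail d = v) = {σ v}) {d : D} {v : Fin n}
    (hd : d ∈ F) (ht : tail d = v) : d = σ v := by
  have h : d ∈ F.filter (fun d => tail d = v) := mem_filter.mpr ⟨hd, ht⟩
  rw [hσ v] at h
  simpa using h

lemma func_sigma {j : Fin n} {F : Finset D} (hF : IsFunc tail head j F) :
    ∃ σ : Fin n → D, ∀ v, F.filter (fun d => tail d = v) = {σ v} := by
  choose σ hσ using fun v => Finset.card_eq_one.mp (hF.1 v)
  exact ⟨σ, hσ⟩

lemma func_step_eq {F : Finset D} {σ : Fin n → D}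
    (hσ : ∀ v, F.filter (fun d => tail d = v) = {σ v}) :
    ∀ x y, treeStep tail head F x y → y = (fun v => head (σ v)) x := by
  rintro x y ⟨e, he, hte, hhe⟩
  rw [← hhe, sigma_eq hσ he hte]

lemma tree_not_mem {i : Fin n} {T : Finset D} (hT : IsInwardTree tail head i T)
    {d : D} (hd : tail d = i) : d ∉ T := by
  intro hmem
  have h : d ∈ T.filter (fun d => tail d = i) := mem_filter.mpr ⟨hmem, hd⟩
  rw [Finset.card_eq_zero.mp hT.2.1] at h
  exact absurd h (Finset.notMem_empty d)

/-- Inserting an extra arc out of the root of an inward tree yields a functional graph,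
provided the root can still reach `j` afterwards. -/
lemma func_insert {j : Fin n} {d : D} {T : Finset D}
    (hT : IsInwardTree tail head (tail d) T)
    (hreach : Relation.ReflTransGen (treeStep tail head (insert d T)) (tail d) j) :
    IsFunc tail head j (insert d T) := by
  constructor
  · intro v
    rw [filter_insert]
    by_cases hv : tail d = v
    · rw [if_pos hv]
      have h0 : T.filter (fun e => tail e = v) = ∅ := by
        rw [← hv]; exact Finset.card_eq_zero.mp hT.2.1
      rw [h0]
      simp
    · rw [if_neg hv]
      exact hT.1 v (fun h => hv h.symm)
  · intro v
    refine Relation.ReflTransGen.trans ?_ hreach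
    exact Relation.ReflTransGen.lift (p := treeStep tail head (insert d T)) id
      (fun a b (h : treeStep tail head T a b) => by
        obtain ⟨e, he, h1, h2⟩ := h; exact ⟨e, mem_insert_of_mem he, h1, h2⟩) _ _ (hT.2.2 v)

lemma tree_erase_deg {F : Finset D} {σ : Fin n → D}
    (hσ : ∀ v, F.filter (fun d => tail d = v) = {σ v}) (i : Fin n) :
    (∀ v, v ≠ i → ((F.erase (σ i)).filter (fun d => tail d = v)).card = 1) ∧
    ((F.erase (σ i)).filter (fun d => tail d = i)).card = 0 := by
  constructor
  · intro v hv
    rw [filter_erase, hσ v, Finset.erase_eq_of_notMem, Finset.card_singleton]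
    intro hmem
    have h1 : σ i = σ v := Finset.mem_singleton.mp hmem
    have h2 : i = v := by
      rw [← (sigma_mem hσ i).2, ← (sigma_mem hσ v).2, h1]
    exact hv h2.symm
  · rw [filter_erase, hσ i]
    simp

lemma func_split_root {j : Fin n} {F : Finset D} (hF : IsFunc tail head j F) :
    ∃ d ∈ F, tail d = j ∧ IsInwardTree tail head j (F.erase d) := by
  obtain ⟨σ, hσ⟩ := func_sigma hF
  refine ⟨σ j, (sigma_mem hσ j).1, (sigma_mem hσ j).2,
    (tree_erase_deg hσ j).1, (tree_erase_deg hσ j).2, ?_⟩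
  intro v
  obtain ⟨m, hm⟩ := reach_iterate (func_step_eq hσ) (hF.2 v)
  refine iterate_reach ?_ m v hm
  intro x hx
  refine ⟨σ x, Finset.mem_erase.mpr ⟨?_, (sigma_mem hσ x).1⟩, (sigma_mem hσ x).2, rfl⟩
  intro h
  exact hx (by rw [← (sigma_mem hσ x).2, h, (sigma_mem hσ j).2])

lemma func_split {j : Fin n} {F : Finset D} (hF : IsFunc tail head j F) :
    ∃ d ∈ F, head d = j ∧ IsInwardTree tail head (tail d) (F.erase d) := by
  obtain ⟨σ, hσ⟩ := func_sigma hF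
  set g : Fin n → Fin n := fun v => head (σ v) with hg_def
  obtain ⟨m, hm⟩ := reach_iterate (func_step_eq hσ) (hF.2 (g j))
  -- hm : g^[m] (g j) = j
  set i : Fin n := g^[m] j with hi_def
  have hgi : g i = j := by
    rw [hi_def, ← Function.iterate_succ_apply' g m j, Function.iterate_succ_apply]
    exact hm
  have hti : tail (σ i) = i := (sigma_mem hσ i).2
  refine ⟨σ i, (sigma_mem hσ i).1, hgi, ?_⟩
  rw [hti]
  refine ⟨(tree_erase_deg hσ i).1, (tree_erase_deg hσ i).2, ?_⟩
  intro v
  obtain ⟨m₁, hm₁⟩ := reach_iterate (func_step_eq hσ) (hF.2 v)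
  have hmm : g^[m + m₁] v = i := by
    rw [Function.iterate_add_apply, hm₁, hi_def]
  refine iterate_reach ?_ (m + m₁) v hmm
  intro x hx
  refine ⟨σ x, Finset.mem_erase.mpr ⟨?_, (sigma_mem hσ x).1⟩, (sigma_mem hσ x).2, rfl⟩
  intro h
  exact hx (by rw [← (sigma_mem hσ x).2, h, hti])

lemma func_split_unique {j : Fin n} {F : Finset D} (hF : IsFunc tail head j F)
    {d d' : D} (hd : d ∈ F) (hdh : head d = j)
    (hdt : IsInwardTree tail head (tail d) (F.erase d))
    (hd' : d' ∈ F) (hdh' : head d' = j)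
    (hdt' : IsInwardTree tail head (tail d') (F.erase d')) :
    d = d' := by
  obtain ⟨σ, hσ⟩ := func_sigma hF
  set g : Fin n → Fin n := fun v => head (σ v) with hg_def
  have key : ∀ e : D, e ∈ F → head e = j →
      IsInwardTree tail head (tail e) (F.erase e) →
      ∃ s, g^[s] j = tail e ∧ (∀ t < s, g^[t] j ≠ tail e) ∧ g^[s + 1] j = j := by
    intro e he heh het
    have heq : e = σ (tail e) := sigma_eq hσ he rfl
    have hg : ∀ x y, treeStep tail head (F.erase e) x y → x ≠ tail e ∧ y = g x := by
      rintro x y ⟨a, ha, hat, hah⟩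
      have haF := Finset.mem_of_mem_erase ha
      have hane := Finset.ne_of_mem_erase ha
      have haσ : a = σ x := sigma_eq hσ haF hat
      constructor
      · intro hx
        exact hane (by rw [haσ, hx, ← heq])
      · rw [← hah, haσ]
    obtain ⟨s, hs, hav⟩ := reach_iterate_avoid hg (het.2.2 j)
    refine ⟨s, hs, hav, ?_⟩
    rw [Function.iterate_succ_apply', hs]
    show head (σ (tail e)) = j
    rw [← heq]; exact heh
  obtain ⟨s, hs, hav, hret⟩ := key d hd hdh hdt
  obtain ⟨s', hs', hav', hret'⟩ := key d' hd' hdh' hdt'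
  have hteq : tail d = tail d' := by
    rcases lt_trichotomy s s' with h | h | h
    · exfalso
      have heq2 : g^[s'] j = g^[s' - (s + 1)] j := by
        conv_lhs => rw [show s' = (s' - (s + 1)) + (s + 1) by omega]
        rw [Function.iterate_add_apply, hret]
      exact hav' (s' - (s + 1)) (by omega) (heq2 ▸ hs')
    · rw [← hs, h, hs']
    · exfalso
      have heq2 : g^[s] j = g^[s - (s' + 1)] j := by
        conv_lhs => rw [show s = (s - (s' + 1)) + (s' + 1) by omega]
        rw [Function.iterate_add_apply, hret']
      exact hav (s - (s' + 1)) (by omega) (heq2 ▸ hs)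
  rw [sigma_eq hσ hd rfl, sigma_eq hσ hd' rfl, hteq]

/-- `ReachIn tail head i m v` : one can go from `v` to `i` in exactly `m` arc steps. -/
def ReachIn (tail head : D → Fin n) (i : Fin n) : ℕ → Fin n → Prop
  | 0, v => v = i
  | (m + 1), v => ∃ d : D, tail d = v ∧ ReachIn tail head i m (head d)

lemma exists_tree
    (hconn : ∀ x y : Fin n,
      Relation.ReflTransGen (fun a b => ∃ d : D, tail d = a ∧ head d = b) x y)
    (i : Fin n) : ∃ T : Finset D, IsInwardTree tail head i T := by
  classical
  have hP : ∀ v : Fin n, ∃ m, ReachIn tail head i m v := by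
    intro v
    refine Relation.ReflTransGen.head_induction_on (hconn v i) ⟨0, rfl⟩ ?_
    rintro a c ⟨d, hdt, hdh⟩ _ ⟨m, hm⟩
    exact ⟨m + 1, d, hdt, hdh ▸ hm⟩
  set φ : Fin n → ℕ := fun v => Nat.find (hP v) with hφ_def
  have hstep : ∀ v : Fin n, v ≠ i → ∃ d : D, tail d = v ∧ φ (head d) < φ v := by
    intro v hv
    have hspec : ReachIn tail head i (φ v) v := Nat.find_spec (hP v)
    obtain ⟨m, hm⟩ : ∃ m, φ v = m + 1 := by
      refine Nat.exists_eq_succ_of_ne_zero (fun h0 => hv ?_)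
      rw [h0] at hspec
      exact hspec
    rw [hm] at hspec
    obtain ⟨d, hdt, hdr⟩ := hspec
    refine ⟨d, hdt, ?_⟩
    calc φ (head d) ≤ m := Nat.find_le hdr
    _ < φ v := by omega
  choose f hf1 hf2 using fun v : {v : Fin n // v ≠ i} => hstep v v.2
  refine ⟨(Finset.univ : Finset {v : Fin n // v ≠ i}).image f, ?_, ?_, ?_⟩
  · intro v hv
    have : (Finset.univ.image f).filter (fun d => tail d = v) = {f ⟨v, hv⟩} := by
      ext d
      simp only [mem_filter, mem_image, mem_univ, true_and, Finset.mem_singleton]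
      constructor
      · rintro ⟨⟨u, rfl⟩, htd⟩
        have hu : (u : Fin n) = v := by rw [← hf1 u, htd]
        have : u = ⟨v, hv⟩ := Subtype.ext hu
        rw [this]
      · rintro rfl
        exact ⟨⟨⟨v, hv⟩, rfl⟩, hf1 _⟩
    rw [this, Finset.card_singleton]
  · rw [Finset.card_eq_zero, Finset.filter_eq_empty_iff]
    rintro d hd
    obtain ⟨u, _, rfl⟩ := Finset.mem_image.mp hd
    rw [hf1]
    exact u.2
  · have main : ∀ m, ∀ v : Fin n, φ v ≤ m →
        Relation.ReflTransGen (treeStep tail head (Finset.univ.image f)) v i := by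
      intro m
      induction m with
      | zero =>
        intro v hv
        have hspec : ReachIn tail head i (φ v) v := Nat.find_spec (hP v)
        rw [Nat.le_zero.mp hv] at hspec
        have hvi : v = i := hspec
        rw [hvi]
      | succ m ih =>
        intro v hv
        by_cases hvi : v = i
        · rw [hvi]
        · refine Relation.ReflTransGen.head
            ⟨f ⟨v, hvi⟩, Finset.mem_image_of_mem f (mem_univ _), hf1 _, rfl⟩ ?_
          have h2 : φ (head (f ⟨v, hvi⟩)) < φ v := hf2 ⟨v, hvi⟩
          exact ih _ (by omega)
    exact fun v => main (φ v) v le_rfl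

open scoped Classical in
lemma tws_eq (i : Fin n) :
    treeWeightSum tail head w i
      = ∑ T ∈ Finset.univ.filter (IsInwardTree tail head i), ∏ d ∈ T, w d := by
  rw [treeWeightSum, Finset.sum_filter]

open scoped Classical in
lemma L1 (j : Fin n) :
    treeWeightSum tail head w j * (∑ d ∈ univ.filter (fun d => tail d = j), w d)
      = ∑ F ∈ univ.filter (IsFunc tail head j), ∏ d ∈ F, w d := by
  rw [tws_eq, Finset.sum_mul_sum, ← Finset.sum_product']
  refine Finset.sum_bij (fun p _ => insert p.2 p.1) ?_ ?_ ?_ ?_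
  · rintro ⟨T, d⟩ hp
    rw [Finset.mem_product] at hp
    obtain ⟨hT, hd⟩ := hp
    rw [mem_filter] at hT hd ⊢
    refine ⟨mem_univ _, func_insert (hd.2 ▸ hT.2) (hd.2 ▸ Relation.ReflTransGen.refl)⟩
  · rintro ⟨T, d⟩ hp ⟨T', d'⟩ hp' heq
    rw [Finset.mem_product, mem_filter, mem_filter] at hp hp'
    have heq2 : insert d T = insert d' T' := heq
    have hdT : d ∉ T := tree_not_mem hp.1.2 hp.2.2
    have hdT' : d' ∉ T' := tree_not_mem hp'.1.2 hp'.2.2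
    have hd'd : d' = d := by
      have hmem : d' ∈ insert d T := by rw [heq2]; exact mem_insert_self _ _
      rcases Finset.mem_insert.mp hmem with h | h
      · exact h
      · exact absurd h (tree_not_mem hp.1.2 hp'.2.2)
    have hTT : T = T' := by
      rw [← Finset.erase_insert hdT, ← Finset.erase_insert hdT', heq2, hd'd]
    simp [hd'd, hTT]
  · intro F hF
    rw [mem_filter] at hF
    obtain ⟨d, hdF, hdt, hdtree⟩ := func_split_root hF.2
    refine ⟨(F.erase d, d), ?_, Finset.insert_erase hdF⟩
    rw [Finset.mem_product, mem_filter, mem_filter]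
    exact ⟨⟨mem_univ _, hdtree⟩, mem_univ _, hdt⟩
  · rintro ⟨T, d⟩ hp
    rw [Finset.mem_product, mem_filter, mem_filter] at hp
    rw [Finset.prod_insert (tree_not_mem hp.1.2 hp.2.2), mul_comm]

open scoped Classical in
lemma L2 (j : Fin n) :
    (∑ d ∈ univ.filter (fun d => head d = j), treeWeightSum tail head w (tail d) * w d)
      = ∑ F ∈ univ.filter (IsFunc tail head j), ∏ d ∈ F, w d := by
  have hexp : ∀ d : D, treeWeightSum tail head w (tail d) * w d
      = ∑ T ∈ Finset.univ.filter (IsInwardTree tail head (tail d)), (∏ e ∈ T, w e) * w d := by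
    intro d
    rw [tws_eq, Finset.sum_mul]
  rw [Finset.sum_congr rfl (fun d _ => hexp d), Finset.sum_sigma']
  refine Finset.sum_bij (fun x _ => insert x.1 x.2) ?_ ?_ ?_ ?_
  · rintro ⟨d, T⟩ hx
    rw [Finset.mem_sigma, mem_filter, mem_filter] at hx
    rw [mem_filter]
    refine ⟨mem_univ _, func_insert hx.2.2 ?_⟩
    exact Relation.ReflTransGen.single ⟨d, mem_insert_self _ _, rfl, hx.1.2⟩
  · rintro ⟨d, T⟩ hx ⟨d', T'⟩ hx' heq
    rw [Finset.mem_sigma, mem_filter, mem_filter] at hx hx'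
    have heq2 : insert d T = insert d' T' := heq
    have hdT : d ∉ T := tree_not_mem hx.2.2 rfl
    have hdT' : d' ∉ T' := tree_not_mem hx'.2.2 rfl
    have hF : IsFunc tail head j (insert d T) :=
      func_insert hx.2.2 (Relation.ReflTransGen.single ⟨d, mem_insert_self _ _, rfl, hx.1.2⟩)
    have hdd : d = d' := by
      refine func_split_unique hF (mem_insert_self _ _) hx.1.2
        (by rw [Finset.erase_insert hdT]; exact hx.2.2)
        (by rw [heq2]; exact mem_insert_self _ _) hx'.1.2 ?_
      rw [heq2, Finset.erase_insert hdT']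
      exact hx'.2.2
    subst hdd
    have hTT : T = T' := by
      rw [← Finset.erase_insert hdT, ← Finset.erase_insert hdT', heq2]
    subst hTT
    rfl
  · intro F hF
    rw [mem_filter] at hF
    obtain ⟨d, hdF, hdh, hdtree⟩ := func_split hF.2
    refine ⟨⟨d, F.erase d⟩, ?_, Finset.insert_erase hdF⟩
    rw [Finset.mem_sigma, mem_filter, mem_filter]
    exact ⟨⟨mem_univ _, hdh⟩, mem_univ _, hdtree⟩
  · rintro ⟨d, T⟩ hx
    rw [Finset.mem_sigma, mem_filter, mem_filter] at hx
    rw [Finset.prod_insert (tree_not_mem hx.2.2 rfl), mul_comm]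

end MTaux

/-- Weighted directed matrix-tree / Markov chain tree theorem: for a strongly connected
weighted digraph with positive arc weights, the vector of rooted inward spanning-tree
weight sums is a strictly positive left null vector of the directed Laplacian. -/
theorem matrix_tree_left_null_vector {n : ℕ} {D : Type*} [Fintype D]
    (tail head : D → Fin n) (w : D → ℝ) (hw : ∀ d, 0 < w d)
    (hconn : ∀ x y : Fin n,
      Relation.ReflTransGen (fun a b => ∃ d : D, tail d = a ∧ head d = b) x y) :
    (∀ i, 0 < treeWeightSum tail head w i) ∧
    (∀ j, ∑ i, treeWeightSum tail head w i * lap tail head w i j = 0) := by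
  classical
  constructor
  · intro i
    obtain ⟨T₀, hT₀⟩ := MTaux.exists_tree hconn i
    rw [treeWeightSum]
    refine Finset.sum_pos' (fun T _ => ?_) ⟨T₀, mem_univ _, ?_⟩
    · split
      · exact Finset.prod_nonneg (fun d _ => (hw d).le)
      · exact le_refl 0
    · rw [if_pos hT₀]
      exact Finset.prod_pos (fun d _ => hw d)
  · intro j
    have expand : ∑ i, treeWeightSum tail head w i * lap tail head w i j
        = (∑ i, if i = j then
            treeWeightSum tail head w i * (∑ d ∈ univ.filter (fun d => tail d = i), w d)
          else 0)
          - ∑ i, treeWeightSum tail head w i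
              * (∑ d ∈ univ.filter (fun d => tail d = i ∧ head d = j), w d) := by
      rw [← Finset.sum_sub_distrib]
      refine Finset.sum_congr rfl fun i _ => ?_
      simp only [lap]
      by_cases h : i = j <;> simp [h, mul_sub]
    rw [expand, Finset.sum_ite_eq' univ j, if_pos (mem_univ j)]
    have rhs_eq : ∑ i, treeWeightSum tail head w i
        * (∑ d ∈ univ.filter (fun d => tail d = i ∧ head d = j), w d)
        = ∑ d ∈ univ.filter (fun d => head d = j), treeWeightSum tail head w (tail d) * w d := by
      have hfib : ∀ i : Fin n, univ.filter (fun d => tail d = i ∧ head d = j)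
          = (univ.filter (fun d => head d = j)).filter (fun d => tail d = i) := by
        intro i
        rw [Finset.filter_filter]
        apply Finset.filter_congr
        intro d _
        simp [and_comm]
      calc ∑ i, treeWeightSum tail head w i
            * (∑ d ∈ univ.filter (fun d => tail d = i ∧ head d = j), w d)
          = ∑ i, ∑ d ∈ (univ.filter (fun d => head d = j)).filter (fun d => tail d = i),
              treeWeightSum tail head w (tail d) * w d := by
            refine Finset.sum_congr rfl fun i _ => ?_
            rw [hfib i, Finset.mul_sum]
            refine Finset.sum_congr rfl fun d hd => ?_
            rw [(mem_filter.mp hd).2]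
        _ = ∑ d ∈ univ.filter (fun d => head d = j),
              treeWeightSum tail head w (tail d) * w d :=
            Finset.sum_fiberwise _ _ _
    rw [rhs_eq, sub_eq_zero, MTaux.L1, MTaux.L2]
end

section
/- If λ assigns weight 2 to a single dart d and weight 1 to every other dart of a torus graph's system, then λ is not realizable: assuming the truncated system (removing the row of u = tail(d) and fixing p_u) coincides with the all-ones Tutte system and is uniquely solvable, solvability of the full system L^λ P = H^λ forces p_v − p_u + τ_d = (0,0), i.e., the edge of d has length zero in the all-ones drawing. -/
open Finset

/-- The right-hand side `H^w` of the toroidal Laplacian system: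
`H_i = Σ_{tail d = i} w_d τ_d`. -/
def rhs {n : ℕ} {D : Type*} [Fintype D]
    (tail : D → Fin n) (τ : D → Fin 2 → ℝ) (w : D → ℝ) : Matrix (Fin n) (Fin 2) ℝ :=
  fun i j => ∑ d ∈ univ.filter (fun d => tail d = i), w d * τ d j

set_option linter.unusedSectionVars false

section aux
variable {n : ℕ} {D : Type*} [Fintype D] [DecidableEq D]
variable (tail head : D → Fin n) (τ : D → Fin 2 → ℝ)

lemma lap_add' (w1 w2 : D → ℝ) :
    lap tail head (fun d => w1 d + w2 d) = lap tail head w1 + lap tail head w2 := by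
  funext i j
  simp only [lap, Matrix.add_apply, Finset.sum_add_distrib]
  split_ifs <;> ring

lemma rhs_add' (w1 w2 : D → ℝ) :
    rhs tail τ (fun d => w1 d + w2 d) = rhs tail τ w1 + rhs tail τ w2 := by
  funext i j
  simp only [rhs, Matrix.add_apply, add_mul, Finset.sum_add_distrib]

lemma lap_row_sum (w : D → ℝ) (i : Fin n) : ∑ j, lap tail head w i j = 0 := by
  have hfib : ∑ j : Fin n, ∑ d ∈ univ.filter (fun d => tail d = i ∧ head d = j), w d
      = ∑ d ∈ univ.filter (fun d => tail d = i), w d := by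
    rw [← Finset.sum_fiberwise (univ.filter fun d => tail d = i) head w]
    refine Finset.sum_congr rfl fun j _ => Finset.sum_congr ?_ fun _ _ => rfl
    simp [Finset.filter_filter]
  simp only [lap, Finset.sum_sub_distrib, hfib, Finset.sum_ite_eq, Finset.mem_univ,
    if_true, sub_self]

end aux

/-- Doubling the weight of a single dart of a torus graph yields a non-realizable weight
vector: if `P` solves the all-ones system, solutions of the truncated all-ones system
(all rows except that of `u = tail d₀`) are unique up to translation, and the edge of `d₀`
has nonzero length in the all-ones drawing, then the system for the weight vector
assigning `2` to `d₀` and `1` to every other dart has no solution. -/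
theorem doubled_dart_weight_not_realizable {n : ℕ} {D : Type*} [Fintype D] [DecidableEq D]
    (tail head : D → Fin n) (τ : D → Fin 2 → ℝ) (d₀ : D)
    (P : Matrix (Fin n) (Fin 2) ℝ)
    (hP : lap tail head (fun _ => (1 : ℝ)) * P = rhs tail τ (fun _ => (1 : ℝ)))
    (huniq : ∀ Q : Matrix (Fin n) (Fin 2) ℝ,
      (∀ i, i ≠ tail d₀ → ∀ j,
        (lap tail head (fun _ => (1 : ℝ)) * Q) i j = rhs tail τ (fun _ => (1 : ℝ)) i j) →
      ∃ t : Fin 2 → ℝ, ∀ i j, Q i j = P i j + t j)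
    (hedge : ¬ ∀ j, P (head d₀) j - P (tail d₀) j + τ d₀ j = 0) :
    ¬ ∃ Q : Matrix (Fin n) (Fin 2) ℝ,
        lap tail head (fun d => if d = d₀ then (2 : ℝ) else 1) * Q
          = rhs tail τ (fun d => if d = d₀ then (2 : ℝ) else 1) := by
  rintro ⟨Q, hQ⟩
  set wδ : D → ℝ := fun d => if d = d₀ then 1 else 0 with hwδ
  have hw : (fun d => if d = d₀ then (2 : ℝ) else 1) = (fun d => (1 : ℝ) + wδ d) := by
    funext d; simp only [hwδ]; split_ifs <;> norm_num
  have hsplit : lap tail head (fun _ => (1:ℝ)) * Q + lap tail head wδ * Q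
      = rhs tail τ (fun _ => (1:ℝ)) + rhs tail τ wδ := by
    have h := hQ
    rw [hw, lap_add' tail head (fun _ => 1) wδ, rhs_add' tail τ (fun _ => 1) wδ,
      Matrix.add_mul] at h
    exact h
  have hlapδ0 : ∀ i, i ≠ tail d₀ → ∀ j, lap tail head wδ i j = 0 := by
    intro i hi j
    have h1 : ∑ d ∈ univ.filter (fun d => tail d = i), wδ d = 0 := by
      apply Finset.sum_eq_zero
      intro d hd
      simp only [Finset.mem_filter] at hd
      have hne : d ≠ d₀ := by rintro rfl; exact hi hd.2.symm
      simp [hwδ, hne]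
    have h2 : ∑ d ∈ univ.filter (fun d => tail d = i ∧ head d = j), wδ d = 0 := by
      apply Finset.sum_eq_zero
      intro d hd
      simp only [Finset.mem_filter] at hd
      have hne : d ≠ d₀ := by rintro rfl; exact hi hd.2.1.symm
      simp [hwδ, hne]
    simp [lap, h1, h2]
  have hrhsδ0 : ∀ i, i ≠ tail d₀ → ∀ j, rhs tail τ wδ i j = 0 := by
    intro i hi j
    apply Finset.sum_eq_zero
    intro d hd
    simp only [Finset.mem_filter] at hd
    have hne : d ≠ d₀ := by rintro rfl; exact hi hd.2.symm
    simp [hwδ, hne]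
  have htrunc : ∀ i, i ≠ tail d₀ → ∀ j,
      (lap tail head (fun _ => (1:ℝ)) * Q) i j = rhs tail τ (fun _ => (1:ℝ)) i j := by
    intro i hi j
    have h := congrFun (congrFun hsplit i) j
    simp only [Matrix.add_apply] at h
    have hz : (lap tail head wδ * Q) i j = 0 := by
      simp only [Matrix.mul_apply]
      exact Finset.sum_eq_zero fun k _ => by rw [hlapδ0 i hi k, zero_mul]
    rw [hz, add_zero, hrhsδ0 i hi j, add_zero] at h
    exact h
  obtain ⟨t, ht⟩ := huniq Q htrunc
  have hfull : lap tail head (fun _ => (1:ℝ)) * Q = rhs tail τ (fun _ => (1:ℝ)) := by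
    funext i j
    have key : (lap tail head (fun _ => (1:ℝ)) * Q) i j
        = (lap tail head (fun _ => (1:ℝ)) * P) i j
          + t j * ∑ k, lap tail head (fun _ => (1:ℝ)) i k := by
      simp only [Matrix.mul_apply, Finset.mul_sum]
      rw [← Finset.sum_add_distrib]
      exact Finset.sum_congr rfl fun k _ => by rw [ht k j]; ring
    rw [key, lap_row_sum, mul_zero, add_zero, hP]
  have hδrow : ∀ j, (lap tail head wδ * Q) (tail d₀) j = rhs tail τ wδ (tail d₀) j := by
    intro j
    have h := congrFun (congrFun hsplit (tail d₀)) j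
    simp only [Matrix.add_apply] at h
    rw [congrFun (congrFun hfull (tail d₀)) j] at h
    linarith
  have hlapδ : ∀ k, lap tail head wδ (tail d₀) k
      = (if tail d₀ = k then 1 else 0) - (if head d₀ = k then 1 else 0) := by
    intro k
    have h1 : ∑ d ∈ univ.filter (fun d => tail d = tail d₀), wδ d = 1 := by
      simp only [hwδ]
      rw [Finset.sum_ite_eq']
      simp
    have h2 : ∑ d ∈ univ.filter (fun d => tail d = tail d₀ ∧ head d = k), wδ d
        = if head d₀ = k then 1 else 0 := by
      simp only [hwδ]
      rw [Finset.sum_ite_eq']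
      simp
    simp only [lap, h1, h2]
  have hLHS : ∀ j, (lap tail head wδ * Q) (tail d₀) j
      = Q (tail d₀) j - Q (head d₀) j := by
    intro j
    simp only [Matrix.mul_apply, hlapδ, sub_mul, ite_mul, one_mul, zero_mul,
      Finset.sum_sub_distrib, Finset.sum_ite_eq, Finset.mem_univ, if_true]
  have hRHS : ∀ j, rhs tail τ wδ (tail d₀) j = τ d₀ j := by
    intro j
    simp only [rhs, hwδ, ite_mul, one_mul, zero_mul]
    rw [Finset.sum_ite_eq']
    simp
  apply hedge
  intro j
  have h := hδrow j
  rw [hLHS j, hRHS j, ht (tail d₀) j, ht (head d₀) j] at h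
  linarith
end
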